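/- Let ψ : ℝⁿ → ℝ be L-Lipschitz with respect to the parabolic metric d((x,s),(y,t)) = |x−y| + |s−t|^{1/2}. Then for every parabolic box Q (a box I₁ × I₂ with I₁ ⊂ ℝ^{n−1} a cube and |I₂| = ℓ(I₁)²), the restricted L∞ beta number satisfies β_∞^L(Q) ≤ C(L,n) · (β_2^L(2Q))^{2/(n+3)}, where β_p^L(Q) is defined via approximation by L-Lipschitz affine maps A : ℝ^{n−1} → ℝ of the form (x,t) ↦ A(x). -/

import Mathlib

open MeasureTheory
open scoped NNReal

/-- The parabolic distance on `ℝ^{n-1} × ℝ`. -/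
noncomputable def pdist {d : ℕ} (p q : EuclideanSpace ℝ (Fin d) × ℝ) : ℝ :=
  dist p.1 q.1 + Real.sqrt |p.2 - q.2|

/-- Diameter of a set in the parabolic metric. -/
noncomputable def pdiam {d : ℕ} (S : Set (EuclideanSpace ℝ (Fin d) × ℝ)) : ℝ :=
  sSup ((fun pq : (EuclideanSpace ℝ (Fin d) × ℝ) × (EuclideanSpace ℝ (Fin d) × ℝ) =>
    pdist pq.1 pq.2) '' (S ×ˢ S))

/-- The `c`-dilate of a parabolic box with spatial centre `z`, time centre `t₀` and
spatial side length `ℓ` (hence time side length `ℓ²`). -/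
def pBox (d : ℕ) (z : EuclideanSpace ℝ (Fin d)) (t₀ ℓ c : ℝ) :
    Set (EuclideanSpace ℝ (Fin d) × ℝ) :=
  {p | (∀ i, |p.1 i - z i| ≤ c * ℓ / 2) ∧ |p.2 - t₀| ≤ c * ℓ ^ 2 / 2}

/-- The `L`-restricted `L²` beta number of a parabolic box: the infimum over `L`-Lipschitz
affine maps `A : ℝ^{n-1} → ℝ` of the normalised `L²` distance of `ψ` to `(x,t) ↦ A x`. -/
noncomputable def betaTwoL (d : ℕ) (L : ℝ≥0) (ψ : EuclideanSpace ℝ (Fin d) × ℝ → ℝ)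
    (Q : Set (EuclideanSpace ℝ (Fin d) × ℝ)) : ℝ :=
  sInf {r : ℝ | ∃ A : EuclideanSpace ℝ (Fin d) →ᵃ[ℝ] ℝ, LipschitzWith L A ∧
    r = Real.sqrt ((pdiam Q ^ (d + 2))⁻¹ * ∫ p in Q, (|ψ p - A p.1| / pdiam Q) ^ 2)}

/-- The `L`-restricted `L^∞` beta number of a parabolic box. -/
noncomputable def betaInfL (d : ℕ) (L : ℝ≥0) (ψ : EuclideanSpace ℝ (Fin d) × ℝ → ℝ)
    (Q : Set (EuclideanSpace ℝ (Fin d) × ℝ)) : ℝ :=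
  sInf {r : ℝ | ∃ A : EuclideanSpace ℝ (Fin d) →ᵃ[ℝ] ℝ, LipschitzWith L A ∧
    r = ⨆ p ∈ Q, |ψ p - A p.1| / pdiam Q}


section AuxStmt6

variable {d : ℕ}
local notation "Esp" => EuclideanSpace ℝ (Fin d)

/-- spatial cube centred at `c` of half-width `s`, as a subset of Euclidean space. -/
def spCube (d : ℕ) (c : EuclideanSpace ℝ (Fin d)) (s : ℝ) : Set (EuclideanSpace ℝ (Fin d)) :=
  ⋂ i, {x : EuclideanSpace ℝ (Fin d) | x i ∈ Set.Icc (c i - s) (c i + s)}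

lemma mem_spCube {c : Esp} {s : ℝ} {x : Esp} :
    x ∈ spCube d c s ↔ ∀ i, |x i - c i| ≤ s := by
  simp only [spCube, Set.mem_iInter, Set.mem_setOf_eq, Set.mem_Icc, abs_le]
  constructor
  · intro h i; have := h i; constructor <;> linarith [this.1, this.2]
  · intro h i; have := h i; constructor <;> linarith [this.1, this.2]

lemma isClosed_spCube (c : Esp) (s : ℝ) : IsClosed (spCube d c s) :=
  isClosed_iInter fun i =>
    IsClosed.preimage (EuclideanSpace.proj (𝕜 := ℝ) i).continuous isClosed_Icc

lemma measurableSet_spCube (c : Esp) (s : ℝ) : MeasurableSet (spCube d c s) :=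
  (isClosed_spCube c s).measurableSet

lemma volume_spCube (c : Esp) (s : ℝ) :
    volume (spCube d c s) = ENNReal.ofReal (2 * s) ^ d := by
  have heq : spCube d c s = (MeasurableEquiv.toLp 2 (Fin d → ℝ)).symm ⁻¹'
      ((Set.univ : Set (Fin d)).pi fun i => Set.Icc (c i - s) (c i + s)) := by
    ext x
    simp only [spCube, Set.mem_iInter, Set.mem_setOf_eq, Set.mem_preimage, Set.mem_pi,
      Set.mem_univ, true_implies]
    rfl
  rw [heq, (EuclideanSpace.volume_preserving_symm_measurableEquiv_toLp (Fin d)).measure_preimage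
    (MeasurableSet.univ_pi fun i => measurableSet_Icc).nullMeasurableSet, volume_pi_pi]
  simp only [Real.volume_Icc]
  have hx : ∀ x : Fin d, ENNReal.ofReal (c x + s - (c x - s)) = ENNReal.ofReal (2 * s) :=
    fun x => by congr 1; ring
  rw [Finset.prod_congr rfl (fun x _ => hx x), Finset.prod_const, Finset.card_univ,
    Fintype.card_fin]

lemma dist_le_of_coords {x y : Esp} {u : ℝ} (hu : 0 ≤ u) (h : ∀ i, |x i - y i| ≤ u) :
    dist x y ≤ Real.sqrt d * u := by
  rw [EuclideanSpace.dist_eq]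
  have hsum : ∑ i, dist (x i) (y i) ^ 2 ≤ (d : ℝ) * u ^ 2 := by
    calc ∑ i, dist (x i) (y i) ^ 2 ≤ ∑ _i : Fin d, u ^ 2 :=
          Finset.sum_le_sum fun i _ => pow_le_pow_left₀ dist_nonneg (Real.dist_eq _ _ ▸ h i) 2
      _ = (d : ℝ) * u ^ 2 := by simp [Finset.sum_const, Finset.card_univ]
  calc Real.sqrt (∑ i, dist (x i) (y i) ^ 2) ≤ Real.sqrt ((d : ℝ) * u ^ 2) :=
        Real.sqrt_le_sqrt hsum
    _ = Real.sqrt d * u := by rw [Real.sqrt_mul (by positivity), Real.sqrt_sq hu]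

lemma pBox_eq_prod (z : Esp) (t₀ ℓ c : ℝ) :
    pBox d z t₀ ℓ c = (spCube d z (c * ℓ / 2)) ×ˢ
      Set.Icc (t₀ - c * ℓ ^ 2 / 2) (t₀ + c * ℓ ^ 2 / 2) := by
  ext p
  simp only [pBox, Set.mem_setOf_eq, Set.mem_prod, mem_spCube, Set.mem_Icc]
  constructor
  · rintro ⟨h1, h2⟩
    have := abs_le.1 h2
    exact ⟨h1, by constructor <;> linarith [this.1, this.2]⟩
  · rintro ⟨h1, h2⟩
    exact ⟨h1, abs_le.2 ⟨by linarith [h2.1], by linarith [h2.2]⟩⟩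

lemma measurableSet_pBox (z : Esp) (t₀ ℓ c : ℝ) : MeasurableSet (pBox d z t₀ ℓ c) := by
  rw [pBox_eq_prod]
  exact (measurableSet_spCube _ _).prod measurableSet_Icc

lemma isCompact_pBox (z : Esp) (t₀ ℓ c : ℝ) (hc : 0 ≤ c) (hℓ : 0 ≤ ℓ) :
    IsCompact (pBox d z t₀ ℓ c) := by
  refine Metric.isCompact_of_isClosed_isBounded ?_ ?_
  · rw [pBox_eq_prod]
    exact ((isClosed_spCube _ _).prod isClosed_Icc)
  · refine (Metric.isBounded_closedBall (x := ((z, t₀) : Esp × ℝ))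
      (r := Real.sqrt d * (c * ℓ / 2) + c * ℓ ^ 2 / 2)).subset ?_
    rintro p ⟨h1, h2⟩
    rw [Metric.mem_closedBall, Prod.dist_eq]
    have hs : dist p.1 z ≤ Real.sqrt d * (c * ℓ / 2) := dist_le_of_coords (by positivity) h1
    have ht : dist p.2 t₀ ≤ c * ℓ ^ 2 / 2 := by rw [Real.dist_eq]; exact h2
    have hd1 : (0:ℝ) ≤ Real.sqrt d * (c * ℓ / 2) := by positivity
    have hd2 : (0:ℝ) ≤ c * ℓ ^ 2 / 2 := by positivity
    exact max_le (by linarith) (by linarith)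

lemma continuous_of_pdist_lip {ψ : Esp × ℝ → ℝ} {L : ℝ}
    (hψ : ∀ p q, |ψ p - ψ q| ≤ L * pdist p q) : Continuous ψ := by
  rw [continuous_iff_continuousAt]
  intro q
  rw [ContinuousAt, tendsto_iff_dist_tendsto_zero]
  have h0 : Filter.Tendsto (fun p : Esp × ℝ => L * pdist p q) (nhds q) (nhds 0) := by
    have hc : Continuous (fun p : Esp × ℝ => L * (dist p.1 q.1 + Real.sqrt |p.2 - q.2|)) := by
      apply Continuous.mul continuous_const
      exact (continuous_fst.dist continuous_const).add
        (Real.continuous_sqrt.comp ((continuous_snd.sub continuous_const).abs))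
    have := hc.tendsto q
    simpa [pdist] using this
  exact squeeze_zero (fun p => dist_nonneg)
    (fun p => by rw [Real.dist_eq]; exact hψ p q) h0

open scoped NNReal in
lemma master (L : ℝ≥0) (ψ : Esp × ℝ → ℝ) (A : Esp →ᵃ[ℝ] ℝ)
    (hψ : ∀ p q, |ψ p - ψ q| ≤ (L : ℝ) * pdist p q) (hA : LipschitzWith L A)
    (z : Esp) (t₀ ℓ : ℝ) (hℓ : 0 < ℓ) (p : Esp × ℝ) (hp : p ∈ pBox d z t₀ ℓ 1)
    (hD2pos : 0 < pdiam (pBox d z t₀ ℓ 2))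
    (u : ℝ) (hu0 : 0 ≤ u) (hu1 : u ≤ ℓ / 2)
    (hu2 : (2 * (L : ℝ) + 1) * (Real.sqrt d + 1) * u ≤ |ψ p - A p.1| / 2) :
    |ψ p - A p.1| ^ 2 * u ^ (d + 2) ≤
      4 * pdiam (pBox d z t₀ ℓ 2) ^ (d + 4) *
        ((pdiam (pBox d z t₀ ℓ 2) ^ (d + 2))⁻¹ *
          ∫ q in pBox d z t₀ ℓ 2, (|ψ q - A q.1| / pdiam (pBox d z t₀ ℓ 2)) ^ 2) := by
  set D2 := pdiam (pBox d z t₀ ℓ 2) with hD2def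
  set ε := |ψ p - A p.1| with hεdef
  have hε0 : 0 ≤ ε := abs_nonneg _
  set f : Esp × ℝ → ℝ := fun q => (|ψ q - A q.1| / D2) ^ 2 with hfdef
  set R : Set (Esp × ℝ) :=
    (spCube d p.1 u) ×ˢ Set.Icc (p.2 - u ^ 2) (p.2 + u ^ 2) with hRdef
  -- R ⊆ 2Q
  have hRsub : R ⊆ pBox d z t₀ ℓ 2 := by
    rintro q ⟨hq1, hq2⟩
    rw [mem_spCube] at hq1
    constructor
    · intro i
      have h2 : |p.1 i - z i| ≤ 1 * ℓ / 2 := hp.1 i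
      calc |q.1 i - z i| ≤ |q.1 i - p.1 i| + |p.1 i - z i| := abs_sub_le _ _ _
        _ ≤ u + 1 * ℓ / 2 := add_le_add (hq1 i) h2
        _ ≤ 2 * ℓ / 2 := by linarith
    · have h1 : |q.2 - p.2| ≤ u ^ 2 := by
        rw [abs_le]; exact ⟨by linarith [hq2.1], by linarith [hq2.2]⟩
      have h2 : |p.2 - t₀| ≤ 1 * ℓ ^ 2 / 2 := hp.2
      have hu2' : u ^ 2 ≤ (ℓ / 2) ^ 2 := pow_le_pow_left₀ hu0 hu1 2
      calc |q.2 - t₀| ≤ |q.2 - p.2| + |p.2 - t₀| := abs_sub_le _ _ _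
        _ ≤ u ^ 2 + 1 * ℓ ^ 2 / 2 := add_le_add h1 h2
        _ ≤ 2 * ℓ ^ 2 / 2 := by nlinarith
  -- lower bound for |ψ - A| on R
  have hlow : ∀ q ∈ R, ε / 2 ≤ |ψ q - A q.1| := by
    rintro q ⟨hq1, hq2⟩
    rw [mem_spCube] at hq1
    have hpd : pdist p q ≤ (Real.sqrt d + 1) * u := by
      have hs : dist p.1 q.1 ≤ Real.sqrt d * u := by
        refine dist_le_of_coords hu0 fun i => ?_
        rw [abs_sub_comm]; exact hq1 i
      have ht : Real.sqrt |p.2 - q.2| ≤ u := by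
        have h1 : |p.2 - q.2| ≤ u ^ 2 := by
          rw [abs_sub_comm, abs_le]; exact ⟨by linarith [hq2.1], by linarith [hq2.2]⟩
        calc Real.sqrt |p.2 - q.2| ≤ Real.sqrt (u ^ 2) := Real.sqrt_le_sqrt h1
          _ = u := Real.sqrt_sq hu0
      calc pdist p q = dist p.1 q.1 + Real.sqrt |p.2 - q.2| := rfl
        _ ≤ Real.sqrt d * u + u := add_le_add hs ht
        _ = (Real.sqrt d + 1) * u := by ring
    have hkey : ε ≤ |ψ q - A q.1| + 2 * (L : ℝ) * pdist p q := by
      have h1 : |ψ p - ψ q| ≤ (L : ℝ) * pdist p q := hψ p q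
      have h2 : |A p.1 - A q.1| ≤ (L : ℝ) * pdist p q := by
        have hd := hA.dist_le_mul p.1 q.1
        rw [Real.dist_eq] at hd
        refine hd.trans ?_
        have hdp : dist p.1 q.1 ≤ pdist p q := le_add_of_nonneg_right (Real.sqrt_nonneg _)
        exact mul_le_mul_of_nonneg_left hdp L.coe_nonneg
      have h3 : |(ψ p - A p.1) - (ψ q - A q.1)| ≤ |ψ p - ψ q| + |A p.1 - A q.1| := by
        have he : (ψ p - A p.1) - (ψ q - A q.1) = (ψ p - ψ q) - (A p.1 - A q.1) := by ring
        rw [he]; exact abs_sub _ _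
      have h4 : ε ≤ |ψ q - A q.1| + |(ψ p - A p.1) - (ψ q - A q.1)| := by
        have := abs_sub_abs_le_abs_sub (ψ p - A p.1) (ψ q - A q.1)
        rw [← hεdef] at this
        linarith
      linarith
    have hpd2 : 2 * (L : ℝ) * pdist p q ≤ ε / 2 := by
      have h3 : 2 * (L : ℝ) * pdist p q ≤ 2 * (L : ℝ) * ((Real.sqrt d + 1) * u) :=
        mul_le_mul_of_nonneg_left hpd (by positivity)
      have h5 : (0:ℝ) ≤ (Real.sqrt d + 1) * u := by positivity
      nlinarith [hu2]
    linarith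
  -- measurability, volume
  have hRmeas : MeasurableSet R := (measurableSet_spCube _ _).prod measurableSet_Icc
  have hvol : volume R = (ENNReal.ofReal (2 * u)) ^ d * ENNReal.ofReal (2 * u ^ 2) := by
    rw [hRdef, Measure.volume_eq_prod, Measure.prod_prod, volume_spCube, Real.volume_Icc]
    congr 2
    ring
  have hvolne : volume R ≠ ⊤ := by
    rw [hvol]
    exact ENNReal.mul_ne_top (ENNReal.pow_ne_top ENNReal.ofReal_ne_top) ENNReal.ofReal_ne_top
  -- integrability
  have hψc : Continuous ψ := continuous_of_pdist_lip hψ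
  have hfc : Continuous f := by
    apply Continuous.pow
    apply Continuous.div_const
    exact (hψc.sub (hA.continuous.comp continuous_fst)).abs
  have hint : IntegrableOn f (pBox d z t₀ ℓ 2) volume :=
    hfc.continuousOn.integrableOn_compact (isCompact_pBox z t₀ ℓ 2 (by norm_num) hℓ.le)
  -- integral estimates
  have step1 : (ε / (2 * D2)) ^ 2 * (volume R).toReal ≤ ∫ q in R, f q := by
    refine setIntegral_ge_of_const_le_real hRmeas hvolne (fun q hq => ?_) (hint.mono_set hRsub)
    have h1 : ε / 2 ≤ |ψ q - A q.1| := hlow q hq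
    have h2 : ε / (2 * D2) ≤ |ψ q - A q.1| / D2 := by
      rw [div_le_div_iff₀ (by positivity) hD2pos]
      calc ε * D2 = (ε / 2) * D2 * 2 := by ring
        _ ≤ |ψ q - A q.1| * D2 * 2 := by
            have := mul_le_mul_of_nonneg_right h1 hD2pos.le
            nlinarith
        _ = |ψ q - A q.1| * (2 * D2) := by ring
    exact pow_le_pow_left₀ (by positivity) h2 2
  have step2 : ∫ q in R, f q ≤ ∫ q in pBox d z t₀ ℓ 2, f q := by
    refine setIntegral_mono_set hint ?_ (HasSubset.Subset.eventuallyLE hRsub)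
    exact Filter.Eventually.of_forall fun q => by positivity
  have step3 : u ^ (d + 2) ≤ (volume R).toReal := by
    rw [hvol, ENNReal.toReal_mul, ENNReal.toReal_pow, ENNReal.toReal_ofReal (by positivity),
      ENNReal.toReal_ofReal (by positivity)]
    calc u ^ (d + 2) = u ^ d * u ^ 2 := by ring
      _ ≤ (2 * u) ^ d * (2 * u ^ 2) := by
          refine mul_le_mul (pow_le_pow_left₀ hu0 (by linarith) d) (by nlinarith)
            (by positivity) (by positivity)
  -- combine
  have hI : (ε / (2 * D2)) ^ 2 * u ^ (d + 2) ≤ ∫ q in pBox d z t₀ ℓ 2, f q := by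
    calc (ε / (2 * D2)) ^ 2 * u ^ (d + 2) ≤ (ε / (2 * D2)) ^ 2 * (volume R).toReal :=
          mul_le_mul_of_nonneg_left step3 (by positivity)
      _ ≤ ∫ q in R, f q := step1
      _ ≤ _ := step2
  have hD2ne : D2 ≠ 0 := hD2pos.ne'
  have hrw : 4 * D2 ^ (d + 4) * ((D2 ^ (d + 2))⁻¹ * ∫ q in pBox d z t₀ ℓ 2, f q)
      = 4 * D2 ^ 2 * ∫ q in pBox d z t₀ ℓ 2, f q := by
    rw [show D2 ^ (d + 4) = D2 ^ 2 * D2 ^ (d + 2) by ring]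
    field_simp
  rw [hrw]
  have hsq : (ε / (2 * D2)) ^ 2 = ε ^ 2 / (4 * D2 ^ 2) := by
    rw [div_pow]; congr 1; ring
  rw [hsq] at hI
  have h4D2 : (0:ℝ) < 4 * D2 ^ 2 := by positivity
  calc ε ^ 2 * u ^ (d + 2) = (4 * D2 ^ 2) * (ε ^ 2 / (4 * D2 ^ 2) * u ^ (d + 2)) := by
        field_simp
    _ ≤ (4 * D2 ^ 2) * ∫ q in pBox d z t₀ ℓ 2, f q := mul_le_mul_of_nonneg_left hI h4D2.le
    _ = 4 * D2 ^ 2 * ∫ q in pBox d z t₀ ℓ 2, f q := by ring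

lemma pdist_le_of_mem {z : Esp} {t₀ ℓ c : ℝ} (hc : 0 ≤ c) (hℓ : 0 ≤ ℓ)
    {p q : Esp × ℝ} (hp : p ∈ pBox d z t₀ ℓ c) (hq : q ∈ pBox d z t₀ ℓ c) :
    pdist p q ≤ Real.sqrt d * (c * ℓ) + Real.sqrt c * ℓ := by
  have h1 : dist p.1 q.1 ≤ Real.sqrt d * (c * ℓ) := by
    refine dist_le_of_coords (by positivity) fun i => ?_
    calc |p.1 i - q.1 i| ≤ |p.1 i - z i| + |z i - q.1 i| := abs_sub_le _ _ _
      _ ≤ c * ℓ / 2 + c * ℓ / 2 := by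
          refine add_le_add (hp.1 i) ?_
          rw [abs_sub_comm]; exact hq.1 i
      _ = c * ℓ := by ring
  have h2 : Real.sqrt |p.2 - q.2| ≤ Real.sqrt c * ℓ := by
    have hb : |p.2 - q.2| ≤ c * ℓ ^ 2 := by
      calc |p.2 - q.2| ≤ |p.2 - t₀| + |t₀ - q.2| := abs_sub_le _ _ _
        _ ≤ c * ℓ ^ 2 / 2 + c * ℓ ^ 2 / 2 := by
            refine add_le_add hp.2 ?_
            rw [abs_sub_comm]; exact hq.2
        _ = c * ℓ ^ 2 := by ring
    calc Real.sqrt |p.2 - q.2| ≤ Real.sqrt (c * ℓ ^ 2) := Real.sqrt_le_sqrt hb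
      _ = Real.sqrt c * ℓ := by rw [Real.sqrt_mul hc, Real.sqrt_sq hℓ]
  exact add_le_add h1 h2

lemma bddAbove_pdiam_set {z : Esp} {t₀ ℓ c : ℝ} (hc : 0 ≤ c) (hℓ : 0 ≤ ℓ) :
    BddAbove ((fun pq : (Esp × ℝ) × (Esp × ℝ) => pdist pq.1 pq.2) ''
      ((pBox d z t₀ ℓ c) ×ˢ (pBox d z t₀ ℓ c))) := by
  refine ⟨Real.sqrt d * (c * ℓ) + Real.sqrt c * ℓ, ?_⟩
  rintro x ⟨⟨p, q⟩, ⟨hp, hq⟩, rfl⟩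
  exact pdist_le_of_mem hc hℓ hp hq

lemma pdiam_pBox_le {z : Esp} {t₀ ℓ c : ℝ} (hc : 0 ≤ c) (hℓ : 0 ≤ ℓ) :
    pdiam (pBox d z t₀ ℓ c) ≤ Real.sqrt d * (c * ℓ) + Real.sqrt c * ℓ := by
  refine Real.sSup_le ?_ (by positivity)
  rintro x ⟨⟨p, q⟩, ⟨hp, hq⟩, rfl⟩
  exact pdist_le_of_mem hc hℓ hp hq

lemma center_mem_pBox {z : Esp} {t₀ ℓ c : ℝ} (hc : 0 ≤ c) (hℓ : 0 ≤ ℓ) {t : ℝ}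
    (ht : |t - t₀| ≤ c * ℓ ^ 2 / 2) : ((z, t) : Esp × ℝ) ∈ pBox d z t₀ ℓ c := by
  refine ⟨fun i => ?_, ht⟩
  simp [abs_of_nonneg]; positivity

lemma pdiam_pBox_ge {z : Esp} {t₀ ℓ c : ℝ} (hc : 0 ≤ c) (hℓ : 0 ≤ ℓ) :
    Real.sqrt c * ℓ ≤ pdiam (pBox d z t₀ ℓ c) := by
  have h1 : ((z, t₀ - c * ℓ ^ 2 / 2) : Esp × ℝ) ∈ pBox d z t₀ ℓ c :=
    center_mem_pBox hc hℓ (by rw [show t₀ - c * ℓ ^ 2 / 2 - t₀ = -(c * ℓ ^ 2 / 2) by ring,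
      abs_neg, abs_of_nonneg (by positivity)])
  have h2 : ((z, t₀ + c * ℓ ^ 2 / 2) : Esp × ℝ) ∈ pBox d z t₀ ℓ c :=
    center_mem_pBox hc hℓ (by rw [show t₀ + c * ℓ ^ 2 / 2 - t₀ = c * ℓ ^ 2 / 2 by ring,
      abs_of_nonneg (by positivity)])
  have hmem : pdist ((z, t₀ - c * ℓ ^ 2 / 2) : Esp × ℝ) (z, t₀ + c * ℓ ^ 2 / 2) ∈
      (fun pq : (Esp × ℝ) × (Esp × ℝ) => pdist pq.1 pq.2) ''
        ((pBox d z t₀ ℓ c) ×ˢ (pBox d z t₀ ℓ c)) :=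
    ⟨((z, t₀ - c * ℓ ^ 2 / 2), (z, t₀ + c * ℓ ^ 2 / 2)), ⟨h1, h2⟩, rfl⟩
  have hval : pdist ((z, t₀ - c * ℓ ^ 2 / 2) : Esp × ℝ) (z, t₀ + c * ℓ ^ 2 / 2)
      = Real.sqrt c * ℓ := by
    simp only [pdist]
    have hab : |(t₀ - c * ℓ ^ 2 / 2) - (t₀ + c * ℓ ^ 2 / 2)| = c * ℓ ^ 2 := by
      rw [show (t₀ - c * ℓ ^ 2 / 2) - (t₀ + c * ℓ ^ 2 / 2) = -(c * ℓ ^ 2) by ring, abs_neg,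
        abs_of_nonneg (by positivity)]
    rw [hab, dist_self, Real.sqrt_mul hc, Real.sqrt_sq hℓ, zero_add]
  rw [← hval]
  exact le_csSup (bddAbove_pdiam_set hc hℓ) hmem

lemma pdist_le_pdiam {z : Esp} {t₀ ℓ : ℝ} (hℓ : 0 ≤ ℓ) {p q : Esp × ℝ}
    (hp : p ∈ pBox d z t₀ ℓ 1) (hq : q ∈ pBox d z t₀ ℓ 1) :
    pdist p q ≤ pdiam (pBox d z t₀ ℓ 1) :=
  le_csSup (bddAbove_pdiam_set zero_le_one hℓ) ⟨(p, q), ⟨hp, hq⟩, rfl⟩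




end AuxStmt6

set_option maxHeartbeats 1000000

/-- If `ψ` is `L`-Lipschitz for the parabolic metric, then on every parabolic box `Q`
one has `β_∞^L(Q) ≤ C(L,n) (β_2^L(2Q))^{2/(n+3)}`, where the ambient dimension is
`n = d + 1`, so `n + 3 = d + 4`. -/
theorem stmt6 (d : ℕ) (L : ℝ≥0) :
    ∃ C : ℝ, 0 < C ∧
      ∀ ψ : EuclideanSpace ℝ (Fin d) × ℝ → ℝ,
        (∀ p q, |ψ p - ψ q| ≤ (L : ℝ) * pdist p q) →
      ∀ (z : EuclideanSpace ℝ (Fin d)) (t₀ ℓ : ℝ), 0 < ℓ →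
        betaInfL d L ψ (pBox d z t₀ ℓ 1) ≤
          C * betaTwoL d L ψ (pBox d z t₀ ℓ 2) ^ ((2 : ℝ) / (d + 4)) := by
  classical
  set a : ℝ := Real.sqrt d + 1 with ha_def
  have ha1 : (1:ℝ) ≤ a := le_add_of_nonneg_left (Real.sqrt_nonneg _)
  have ha0 : (0:ℝ) < a := by linarith
  set K : ℝ := 2 * (L:ℝ) + 1 with hK_def
  have hK1 : (1:ℝ) ≤ K := by
    have := L.coe_nonneg; rw [hK_def]; linarith
  have hK0 : (0:ℝ) < K := by linarith
  set N : ℝ := (d:ℝ) + 4 with hN_def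
  have hN0 : (0:ℝ) < N := by positivity
  set e : ℝ := 2 / N with he_def
  have he : (0:ℝ) < e := by positivity
  set c1 : ℝ := 4 * (2 * K * a) ^ (d + 2) with hc1_def
  have hc10 : (0:ℝ) < c1 := by positivity
  set c2 : ℝ := ((2:ℝ) ^ (d + 2) * 4 * (2 * a) ^ (d + 4))⁻¹ with hc2_def
  have hc20 : (0:ℝ) < c2 := by positivity
  set m : ℝ := (Real.sqrt c2) ^ e with hm_def
  have hm0 : (0:ℝ) < m := Real.rpow_pos_of_pos (Real.sqrt_pos.mpr hc20) e
  set Cb : ℝ := 2 * a * c1 ^ ((1:ℝ) / N) with hCb_def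
  have hCb0 : (0:ℝ) < Cb :=
    mul_pos (by linarith) (Real.rpow_pos_of_pos hc10 _)
  set C : ℝ := Cb + (L:ℝ) / m + 1 with hC_def
  have hLm0 : (0:ℝ) ≤ (L:ℝ) / m := div_nonneg L.coe_nonneg hm0.le
  have hC0 : (0:ℝ) < C := by rw [hC_def]; linarith
  have hCb_le : Cb ≤ C := by rw [hC_def]; linarith
  have hLm_le : (L:ℝ) / m ≤ C := by rw [hC_def]; linarith
  clear_value a K N e c1 c2 m Cb C
  refine ⟨C, hC0, ?_⟩
  intro ψ hψ z t₀ ℓ hℓ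
  set Q1 := pBox d z t₀ ℓ 1 with hQ1_def
  set Q2 := pBox d z t₀ ℓ 2 with hQ2_def
  -- diameter bounds
  have hD1l : ℓ ≤ pdiam Q1 := by
    have h := pdiam_pBox_ge (z := z) (t₀ := t₀) (ℓ := ℓ) (c := 1) zero_le_one hℓ.le
    simpa using h
  have hD1pos : 0 < pdiam Q1 := lt_of_lt_of_le hℓ hD1l
  have hsqrt2 : (1:ℝ) ≤ Real.sqrt 2 := by
    rw [show (1:ℝ) = Real.sqrt 1 by simp]
    exact Real.sqrt_le_sqrt (by norm_num)
  have hsqrt2' : Real.sqrt 2 ≤ 2 := by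
    have h4 : Real.sqrt 2 ≤ Real.sqrt 4 := Real.sqrt_le_sqrt (by norm_num)
    rwa [show (4:ℝ) = 2 ^ 2 by norm_num, Real.sqrt_sq (by norm_num : (0:ℝ) ≤ 2)] at h4
  have hD2l : ℓ ≤ pdiam Q2 := by
    have h := pdiam_pBox_ge (z := z) (t₀ := t₀) (ℓ := ℓ) (c := 2) (by norm_num) hℓ.le
    nlinarith
  have hD2pos : 0 < pdiam Q2 := lt_of_lt_of_le hℓ hD2l
  have hD2u : pdiam Q2 ≤ 2 * a * ℓ := by
    have h := pdiam_pBox_le (z := z) (t₀ := t₀) (ℓ := ℓ) (c := 2) (by norm_num) hℓ.le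
    rw [ha_def]
    nlinarith [Real.sqrt_nonneg (d:ℝ)]
  -- center of Q1
  have hcen : ((z, t₀) : EuclideanSpace ℝ (Fin d) × ℝ) ∈ Q1 :=
    center_mem_pBox zero_le_one hℓ.le (by rw [sub_self, abs_zero]; positivity)
  -- the betaInf set is bounded below
  have hbdd : BddBelow {r : ℝ | ∃ A : EuclideanSpace ℝ (Fin d) →ᵃ[ℝ] ℝ, LipschitzWith L A ∧
      r = ⨆ p ∈ Q1, |ψ p - A p.1| / pdiam Q1} := by
    refine ⟨0, ?_⟩
    rintro r ⟨A, hA, rfl⟩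
    exact Real.iSup_nonneg fun p => Real.iSup_nonneg fun _ =>
      div_nonneg (abs_nonneg _) hD1pos.le
  have hInf_le : ∀ A : EuclideanSpace ℝ (Fin d) →ᵃ[ℝ] ℝ, LipschitzWith L A →
      betaInfL d L ψ Q1 ≤ ⨆ p ∈ Q1, |ψ p - A p.1| / pdiam Q1 :=
    fun A hA => csInf_le hbdd ⟨A, hA, rfl⟩
  -- betaInf ≤ L
  have hinfL : betaInfL d L ψ Q1 ≤ (L:ℝ) := by
    have hA0 : LipschitzWith L (AffineMap.const ℝ (EuclideanSpace ℝ (Fin d)) (ψ (z, t₀))) :=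
      (LipschitzWith.const _).weaken zero_le
    refine (hInf_le _ hA0).trans ?_
    refine Real.iSup_le (fun p => Real.iSup_le (fun hp => ?_) L.coe_nonneg) L.coe_nonneg
    rw [div_le_iff₀ hD1pos]
    have h1 : |ψ p - ψ (z, t₀)| ≤ (L:ℝ) * pdist p (z, t₀) := hψ _ _
    have h2 : pdist p (z, t₀) ≤ pdiam Q1 := pdist_le_pdiam hℓ.le hp hcen
    calc |ψ p - (AffineMap.const ℝ (EuclideanSpace ℝ (Fin d)) (ψ (z, t₀))) p.1|
        = |ψ p - ψ (z, t₀)| := by simp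
      _ ≤ (L:ℝ) * pdist p (z, t₀) := h1
      _ ≤ (L:ℝ) * pdiam Q1 := mul_le_mul_of_nonneg_left h2 L.coe_nonneg
  -- the betaTwo set
  set S2 := {r : ℝ | ∃ A : EuclideanSpace ℝ (Fin d) →ᵃ[ℝ] ℝ, LipschitzWith L A ∧
    r = Real.sqrt ((pdiam Q2 ^ (d + 2))⁻¹ *
      ∫ p in Q2, (|ψ p - A p.1| / pdiam Q2) ^ 2)} with hS2_def
  -- key estimate: per element of S2
  have key : ∀ r ∈ S2, betaInfL d L ψ Q1 ≤ C * r ^ e := by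
    rintro r ⟨A, hA, rfl⟩
    set I : ℝ := ∫ p in Q2, (|ψ p - A p.1| / pdiam Q2) ^ 2 with hI_def
    have hI0 : 0 ≤ I := by
      rw [hI_def, hQ2_def]
      exact MeasureTheory.setIntegral_nonneg (measurableSet_pBox z t₀ ℓ 2)
        fun q _ => by positivity
    set J : ℝ := (pdiam Q2 ^ (d + 2))⁻¹ * I with hJ_def
    have hJ0 : 0 ≤ J := mul_nonneg (by positivity) hI0
    clear_value I J
    have hr0 : 0 ≤ Real.sqrt J := Real.sqrt_nonneg _
    have hrsq : Real.sqrt J ^ 2 = J := Real.sq_sqrt hJ0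
    have hre0 : 0 ≤ Real.sqrt J ^ e := Real.rpow_nonneg hr0 e
    by_cases hcase : ∀ p ∈ Q1, |ψ p - A p.1| ≤ K * a * ℓ
    · -- case (b): bound the sup pointwise
      refine (hInf_le A hA).trans ?_
      have hCbJ : (0:ℝ) ≤ Cb * Real.sqrt J ^ e := mul_nonneg hCb0.le hre0
      refine le_trans (Real.iSup_le (fun p => Real.iSup_le (fun hp => ?_) hCbJ) hCbJ)
        (mul_le_mul_of_nonneg_right hCb_le hre0)
      -- pointwise bound
      have hε0 : 0 ≤ |ψ p - A p.1| := abs_nonneg _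
      rcases eq_or_lt_of_le hε0 with h0 | hεpos
      · rw [div_eq_mul_inv, ← h0, zero_mul]; exact hCbJ
      have hεle : |ψ p - A p.1| ≤ K * a * ℓ := hcase p hp
      have hKa0 : (0:ℝ) < 2 * K * a := by positivity
      have hu0 : (0:ℝ) ≤ |ψ p - A p.1| / (2 * K * a) := by positivity
      have hu1 : |ψ p - A p.1| / (2 * K * a) ≤ ℓ / 2 := by
        rw [div_le_div_iff₀ hKa0 (by norm_num : (0:ℝ) < 2)]
        exact le_of_le_of_eq (mul_le_mul_of_nonneg_right hεle (by norm_num)) (by ring)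
      have hu2 : (2 * (L:ℝ) + 1) * (Real.sqrt d + 1) * (|ψ p - A p.1| / (2 * K * a)) ≤
          |ψ p - A p.1| / 2 := by
        have heq : (2 * (L:ℝ) + 1) * (Real.sqrt d + 1) * (|ψ p - A p.1| / (2 * K * a)) =
            |ψ p - A p.1| / 2 := by
          rw [← hK_def, ← ha_def]
          field_simp
        exact le_of_eq heq
      have hmaster := master L ψ A hψ hA z t₀ ℓ hℓ p (hQ1_def ▸ hp)
        (hQ2_def ▸ hD2pos) (|ψ p - A p.1| / (2 * K * a)) hu0 hu1 hu2
      rw [← hQ2_def, ← hI_def, ← hJ_def] at hmaster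
      set ε : ℝ := |ψ p - A p.1| with hε_def
      clear_value ε
      -- hmaster : ε ^ 2 * (ε / (2*K*a)) ^ (d+2) ≤ 4 * pdiam Q2 ^ (d+4) * J
      have hP0 : (0:ℝ) < (2 * K * a) ^ (d + 2) := by positivity
      have h2 : ε ^ (d + 4) ≤ 4 * pdiam Q2 ^ (d + 4) * J * (2 * K * a) ^ (d + 2) := by
        rw [div_pow] at hmaster
        have hei : ε ^ 2 * (ε ^ (d + 2) / (2 * K * a) ^ (d + 2)) =
            ε ^ (d + 4) / (2 * K * a) ^ (d + 2) := by
          field_simp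
          ring
        rw [hei, div_le_iff₀ hP0] at hmaster
        exact hmaster
      have hx : (ε / pdiam Q2) ^ (d + 4) ≤ c1 * J := by
        rw [div_pow, div_le_iff₀ (by positivity : (0:ℝ) < pdiam Q2 ^ (d + 4))]
        calc ε ^ (d + 4) ≤ 4 * pdiam Q2 ^ (d + 4) * J * (2 * K * a) ^ (d + 2) := h2
          _ = c1 * J * pdiam Q2 ^ (d + 4) := by rw [hc1_def]; ring
      -- rpow extraction
      have hεnn : 0 ≤ ε := hεpos.le
      have hx0 : (0:ℝ) ≤ ε / pdiam Q2 := div_nonneg hεnn hD2pos.le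
      have hxe : ε / pdiam Q2 ≤ c1 ^ ((1:ℝ)/N) * Real.sqrt J ^ e := by
        have h3 : ((ε / pdiam Q2) ^ (d + 4) : ℝ) ^ ((1:ℝ)/N) ≤ (c1 * J) ^ ((1:ℝ)/N) :=
          Real.rpow_le_rpow (by positivity) hx (by positivity)
        have h4 : ((ε / pdiam Q2) ^ (d + 4) : ℝ) ^ ((1:ℝ)/N) = ε / pdiam Q2 := by
          rw [← Real.rpow_natCast (ε / pdiam Q2) (d + 4), ← Real.rpow_mul hx0]
          rw [show ((d + 4 : ℕ) : ℝ) = N by rw [hN_def]; push_cast; ring]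
          rw [mul_one_div_cancel hN0.ne', Real.rpow_one]
        have h5 : ((c1 * J : ℝ)) ^ ((1:ℝ)/N) = c1 ^ ((1:ℝ)/N) * J ^ ((1:ℝ)/N) :=
          Real.mul_rpow hc10.le hJ0
        have h6 : Real.sqrt J ^ e = J ^ ((1:ℝ)/N) := by
          rw [Real.sqrt_eq_rpow, ← Real.rpow_mul hJ0, he_def]
          congr 1
          ring
        rw [h4, h5, ← h6] at h3
        exact h3
      -- conclude pointwise
      have h7 : ε / pdiam Q1 ≤ 2 * a * (ε / pdiam Q2) := by
        rw [show 2 * a * (ε / pdiam Q2) = (2 * a * ε) / pdiam Q2 by ring,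
          div_le_div_iff₀ hD1pos hD2pos]
        have hh1 : ε * pdiam Q2 ≤ ε * (2 * a * ℓ) := mul_le_mul_of_nonneg_left hD2u hεnn
        have hh2 : 2 * a * ε * ℓ ≤ 2 * a * ε * pdiam Q1 :=
          mul_le_mul_of_nonneg_left hD1l (by positivity)
        calc ε * pdiam Q2 ≤ ε * (2 * a * ℓ) := hh1
          _ = 2 * a * ε * ℓ := by ring
          _ ≤ 2 * a * ε * pdiam Q1 := hh2
      calc ε / pdiam Q1 ≤ 2 * a * (ε / pdiam Q2) := h7
        _ ≤ 2 * a * (c1 ^ ((1:ℝ)/N) * Real.sqrt J ^ e) :=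
            mul_le_mul_of_nonneg_left hxe (by positivity)
        _ = Cb * Real.sqrt J ^ e := by rw [hCb_def]; ring
    · -- case (a): some point is far; then J is bounded below
      push_neg at hcase
      obtain ⟨p, hp, hεgt⟩ := hcase
      have hu2 : (2 * (L:ℝ) + 1) * (Real.sqrt d + 1) * (ℓ / 2) ≤ |ψ p - A p.1| / 2 := by
        have heq : (2 * (L:ℝ) + 1) * (Real.sqrt d + 1) * (ℓ / 2) = K * a * ℓ / 2 := by
          rw [← hK_def, ← ha_def]; ring
        rw [heq]
        have : K * a * ℓ ≤ |ψ p - A p.1| := hεgt.le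
        gcongr
      have hmaster := master L ψ A hψ hA z t₀ ℓ hℓ p (hQ1_def ▸ hp)
        (hQ2_def ▸ hD2pos) (ℓ / 2) (by positivity) le_rfl hu2
      rw [← hQ2_def, ← hI_def, ← hJ_def] at hmaster
      set ε : ℝ := |ψ p - A p.1| with hε_def
      clear_value ε
      have hεℓ : ℓ ≤ ε := by
        refine le_trans ?_ hεgt.le
        calc ℓ = 1 * 1 * ℓ := by ring
          _ ≤ K * a * ℓ := by
              have h1 : 1 * 1 * ℓ ≤ K * 1 * ℓ :=
                mul_le_mul_of_nonneg_right (mul_le_mul_of_nonneg_right hK1 zero_le_one) hℓ.le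
              have h2 : K * 1 * ℓ ≤ K * a * ℓ :=
                mul_le_mul_of_nonneg_right (mul_le_mul_of_nonneg_left ha1 hK0.le) hℓ.le
              linarith
      have h8 : ℓ ^ 2 * (ℓ / 2) ^ (d + 2) ≤ 4 * (2 * a * ℓ) ^ (d + 4) * J := by
        calc ℓ ^ 2 * (ℓ / 2) ^ (d + 2) ≤ ε ^ 2 * (ℓ / 2) ^ (d + 2) := by
              have := pow_le_pow_left₀ hℓ.le hεℓ 2
              exact mul_le_mul_of_nonneg_right this (by positivity)
          _ ≤ 4 * pdiam Q2 ^ (d + 4) * J := hmaster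
          _ ≤ 4 * (2 * a * ℓ) ^ (d + 4) * J := by
              have hpow : pdiam Q2 ^ (d + 4) ≤ (2 * a * ℓ) ^ (d + 4) :=
                pow_le_pow_left₀ hD2pos.le hD2u (d + 4)
              exact mul_le_mul_of_nonneg_right
                (mul_le_mul_of_nonneg_left hpow (by norm_num : (0:ℝ) ≤ 4)) hJ0
      have hc2J : c2 ≤ J := by
        have hL4 : (0:ℝ) < ℓ ^ (d + 4) := by positivity
        have e1 : ℓ ^ 2 * (ℓ / 2) ^ (d + 2) = ℓ ^ (d + 4) * ((2:ℝ) ^ (d + 2))⁻¹ := by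
          rw [div_pow]; field_simp; ring
        have e2 : 4 * (2 * a * ℓ) ^ (d + 4) * J = 4 * (2 * a) ^ (d + 4) * ℓ ^ (d + 4) * J := by
          rw [show (2 * a * ℓ) ^ (d + 4) = (2 * a) ^ (d + 4) * ℓ ^ (d + 4) by rw [mul_pow]]
          ring
        rw [e1, e2] at h8
        have h10 : ℓ ^ (d + 4) * 1 ≤
            ℓ ^ (d + 4) * ((2:ℝ) ^ (d + 2) * 4 * (2 * a) ^ (d + 4) * J) := by
          have h2p : (0:ℝ) < (2:ℝ) ^ (d + 2) := by positivity
          have h8' := mul_le_mul_of_nonneg_left h8 h2p.le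
          calc ℓ ^ (d + 4) * 1 = (2:ℝ) ^ (d + 2) * (ℓ ^ (d + 4) * ((2:ℝ) ^ (d + 2))⁻¹) := by
                field_simp
            _ ≤ (2:ℝ) ^ (d + 2) * (4 * (2 * a) ^ (d + 4) * ℓ ^ (d + 4) * J) := h8'
            _ = ℓ ^ (d + 4) * ((2:ℝ) ^ (d + 2) * 4 * (2 * a) ^ (d + 4) * J) := by ring
        have h11 : (1:ℝ) ≤ (2:ℝ) ^ (d + 2) * 4 * (2 * a) ^ (d + 4) * J :=
          le_of_mul_le_mul_left h10 hL4
        have hX : (0:ℝ) < (2:ℝ) ^ (d + 2) * 4 * (2 * a) ^ (d + 4) := by positivity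
        calc c2 = ((2:ℝ) ^ (d + 2) * 4 * (2 * a) ^ (d + 4))⁻¹ * 1 := by
              rw [hc2_def, mul_one]
          _ ≤ ((2:ℝ) ^ (d + 2) * 4 * (2 * a) ^ (d + 4))⁻¹ *
              ((2:ℝ) ^ (d + 2) * 4 * (2 * a) ^ (d + 4) * J) :=
              mul_le_mul_of_nonneg_left h11 (inv_nonneg.mpr hX.le)
          _ = J := by field_simp
      have hrm : m ≤ Real.sqrt J ^ e := by
        rw [hm_def]
        exact Real.rpow_le_rpow (Real.sqrt_nonneg _) (Real.sqrt_le_sqrt hc2J) he.le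
      calc betaInfL d L ψ Q1 ≤ (L:ℝ) := hinfL
        _ = (L:ℝ) / m * m := by field_simp
        _ ≤ (L:ℝ) / m * (Real.sqrt J ^ e) := mul_le_mul_of_nonneg_left hrm hLm0
        _ ≤ C * Real.sqrt J ^ e := mul_le_mul_of_nonneg_right hLm_le hre0
  -- limit argument
  have hbt : betaTwoL d L ψ Q2 = sInf S2 := rfl
  have hS2ne : S2.Nonempty := by
    refine ⟨_, AffineMap.const ℝ (EuclideanSpace ℝ (Fin d)) 0,
      (LipschitzWith.const _).weaken zero_le, rfl⟩
  have hS2bdd : BddBelow S2 := by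
    refine ⟨0, ?_⟩
    rintro r ⟨A, hA, rfl⟩
    exact Real.sqrt_nonneg _
  rw [hbt]
  refine le_of_forall_pos_le_add fun δ hδ => ?_
  have hcont : ContinuousAt (fun x : ℝ => C * x ^ e) (sInf S2) :=
    continuousAt_const.mul (Real.continuousAt_rpow_const _ _ (Or.inr he.le))
  have hev : ∀ᶠ x in nhds (sInf S2), C * x ^ e < C * sInf S2 ^ e + δ :=
    hcont.tendsto.eventually_lt_const (by linarith)
  rw [Metric.eventually_nhds_iff] at hev
  obtain ⟨δ', hδ', hball⟩ := hev
  obtain ⟨r, hrS, hrlt⟩ := exists_lt_of_csInf_lt hS2ne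
    (show sInf S2 < sInf S2 + δ' / 2 by linarith)
  have hβle : sInf S2 ≤ r := csInf_le hS2bdd hrS
  have hdist : dist r (sInf S2) < δ' := by
    rw [Real.dist_eq, abs_of_nonneg (by linarith)]
    linarith
  calc betaInfL d L ψ Q1 ≤ C * r ^ e := key r hrS
    _ ≤ C * sInf S2 ^ e + δ := (hball hdist).le
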